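/- Let A ⊆ ℝ^{d−1} be a measurable set such that both A and its complement have positive measure (A is a.e. proper). Then the indicator function 𝟙_A belongs to the Sobolev space H^s(ℝ^{d−1}) only if s < 1/2; in particular 𝟙_A ∉ H^{1/2}(ℝ^{d−1}). -/

import Mathlib

open MeasureTheory

/-- Membership of a function in the fractional Sobolev space `H^s(ℝ^n)` (Gagliardo definition). -/
def MemHs {n : ℕ} (s : ℝ) (u : EuclideanSpace ℝ (Fin n) → ℝ) : Prop :=
  MemLp u 2 (volume : Measure (EuclideanSpace ℝ (Fin n))) ∧
    (∫⁻ x : EuclideanSpace ℝ (Fin n), ∫⁻ y : EuclideanSpace ℝ (Fin n),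
      ENNReal.ofReal ((u x - u y) ^ 2 / ‖x - y‖ ^ ((n : ℝ) + 2 * s))) < ⊤

open MeasureTheory Metric Set ENNReal Filter

namespace Stmt9Aux

lemma measurable_rpow_const {α : Type*} [MeasurableSpace α] {f : α → ℝ} (hf : Measurable f)
    (hf0 : ∀ x, 0 ≤ f x) (P : ℝ) : Measurable fun x => f x ^ P := by
  have heq : (fun x => f x ^ P) = fun x =>
      if f x = 0 then (if P = 0 then 1 else 0) else Real.exp (Real.log (f x) * P) := by
    funext x
    rw [Real.rpow_def_of_nonneg (hf0 x)]
  rw [heq]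
  exact Measurable.ite (hf (measurableSet_singleton 0)) measurable_const
    ((hf.log.mul_const P).exp)

lemma ennreal_le_inv_mul {a b c : ℝ≥0∞} (ha0 : a ≠ 0) (hat : a ≠ ⊤) (h : a * b ≤ c) :
    b ≤ a⁻¹ * c := by
  rw [← one_mul b, ← ENNReal.inv_mul_cancel ha0 hat, mul_assoc]
  exact mul_le_mul_right h _

section Dim

variable {N : ℕ}

local notation "E" => EuclideanSpace ℝ (Fin N)

noncomputable def uf (S : Set E) : E → ℝ := S.indicator (fun _ => (1:ℝ))

noncomputable def gf (S : Set E) (P : ℝ) : E → ℝ≥0∞ :=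
  fun x => ∫⁻ y, ENNReal.ofReal ((uf S x - uf S y)^2 / ‖x - y‖ ^ P)

lemma measurable_uf {S : Set E} (hS : MeasurableSet S) : Measurable (uf S) :=
  Measurable.indicator measurable_const hS

lemma measurable_kernel {S : Set E} (hS : MeasurableSet S) (P : ℝ) :
    Measurable (fun q : E × E => ENNReal.ofReal ((uf S q.1 - uf S q.2)^2 / ‖q.1 - q.2‖ ^ P)) := by
  apply ENNReal.measurable_ofReal.comp
  apply Measurable.div
  · exact (((measurable_uf hS).comp measurable_fst).sub
      ((measurable_uf hS).comp measurable_snd)).pow measurable_const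
  · exact measurable_rpow_const (measurable_fst.sub measurable_snd).norm (fun q => norm_nonneg _) P

lemma measurable_gf {S : Set E} (hS : MeasurableSet S) (P : ℝ) : Measurable (gf S P) :=
  (measurable_kernel hS P).lintegral_prod_right'

lemma gf_compl {S : Set E} (P : ℝ) : gf Sᶜ P = gf S P := by
  funext x
  unfold gf
  congr 1
  funext y
  congr 2
  have h : ∀ z : E, uf Sᶜ z = 1 - uf S z := by
    intro z
    by_cases hz : z ∈ S <;> simp [uf, hz, indicator_of_mem, indicator_of_notMem]
  rw [h x, h y]
  ring

lemma kernel_eq_of_mem_not_mem {S : Set E} {x y : E} (hx : x ∈ S) (hy : y ∉ S) (P : ℝ) :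
    ENNReal.ofReal ((uf S x - uf S y)^2 / ‖x - y‖ ^ P) = ENNReal.ofReal (1 / ‖x - y‖ ^ P) := by
  simp [uf, indicator_of_mem hx, indicator_of_notMem hy]

lemma local_bound {S : Set E} (hS : MeasurableSet S) {P : ℝ} (hP : 0 < P)
    {x : E} (hx : x ∈ S) {M : ℝ≥0∞} (hgx : gf S P x ≤ M) {ρ : ℝ} (hρ : 0 < ρ) :
    volume (Sᶜ ∩ closedBall x ρ) ≤ M * ENNReal.ofReal (ρ ^ P) := by
  set T : Set E := Sᶜ ∩ closedBall x ρ with hT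
  have hTm : MeasurableSet T := hS.compl.inter measurableSet_closedBall
  have hlow : ∀ y ∈ T, ENNReal.ofReal (1 / ρ ^ P) ≤
      ENNReal.ofReal ((uf S x - uf S y)^2 / ‖x - y‖ ^ P) := by
    intro y hy
    rw [kernel_eq_of_mem_not_mem hx hy.1]
    apply ENNReal.ofReal_le_ofReal
    have hxy : x ≠ y := fun h => hy.1 (h ▸ hx)
    have h0 : 0 < ‖x - y‖ := by
      rw [norm_pos_iff, sub_ne_zero]; exact hxy
    have h1 : ‖x - y‖ ^ P ≤ ρ ^ P := by
      apply Real.rpow_le_rpow (norm_nonneg _) _ hP.le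
      have := hy.2
      rw [mem_closedBall, dist_eq_norm] at this
      rwa [norm_sub_rev]
    exact one_div_le_one_div_of_le (Real.rpow_pos_of_pos h0 P) h1
  have step : ENNReal.ofReal (1 / ρ ^ P) * volume T ≤ M := by
    calc ENNReal.ofReal (1 / ρ ^ P) * volume T
        = ∫⁻ _ in T, ENNReal.ofReal (1 / ρ ^ P) := by rw [setLIntegral_const, mul_comm]
      _ ≤ ∫⁻ y in T, ENNReal.ofReal ((uf S x - uf S y)^2 / ‖x - y‖ ^ P) :=
          setLIntegral_mono ((measurable_kernel hS P).comp
            (measurable_const.prodMk measurable_id)) hlow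
      _ ≤ gf S P x := setLIntegral_le_lintegral _ _
      _ ≤ M := hgx
  have hρP : 0 < ρ ^ P := Real.rpow_pos_of_pos hρ P
  have hinv : ENNReal.ofReal (1 / ρ ^ P) = (ENNReal.ofReal (ρ ^ P))⁻¹ := by
    rw [one_div, ENNReal.ofReal_inv_of_pos hρP]
  rw [hinv] at step
  have h2 : volume T = ENNReal.ofReal (ρ ^ P) * ((ENNReal.ofReal (ρ ^ P))⁻¹ * volume T) := by
    rw [← mul_assoc, ENNReal.mul_inv_cancel (by positivity) ofReal_ne_top, one_mul]
  rw [h2]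
  calc ENNReal.ofReal (ρ ^ P) * ((ENNReal.ofReal (ρ ^ P))⁻¹ * volume T)
      ≤ ENNReal.ofReal (ρ ^ P) * M := mul_le_mul_right step _
    _ = M * ENNReal.ofReal (ρ ^ P) := mul_comm _ _

lemma gap {A : Set E} (hA : MeasurableSet A) {s : ℝ} (hs : 1/2 ≤ s)
    {M : ℝ} (hM : 1 ≤ M) {p q : E} (hp : p ∈ A) (hq : q ∉ A)
    (hgp : gf A ((N:ℝ) + 2*s) p ≤ ENNReal.ofReal M)
    (hgq : gf A ((N:ℝ) + 2*s) q ≤ ENNReal.ofReal M) :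
    ((volume (ball (0:E) 1)).toReal / 2^(N+1) / M) ^ (1/(2*s)) ≤ dist p q := by
  have hs0 : (0:ℝ) < s := lt_of_lt_of_le one_half_pos hs
  set P : ℝ := (N:ℝ) + 2*s with hPdef
  have hP : 0 < P := by positivity
  have hpq : p ≠ q := fun h => hq (h ▸ hp)
  set d : ℝ := dist p q with hd
  have hd0 : 0 < d := dist_pos.2 hpq
  have h1 : volume (Aᶜ ∩ closedBall p d) ≤ ENNReal.ofReal M * ENNReal.ofReal (d ^ P) :=
    local_bound hA hP hp hgp hd0
  have hgq' : gf Aᶜ P q ≤ ENNReal.ofReal M := by rw [gf_compl]; exact hgq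
  have h2 : volume (A ∩ closedBall q d) ≤ ENNReal.ofReal M * ENNReal.ofReal (d ^ P) := by
    have := local_bound hA.compl hP hq hgq' hd0
    rwa [compl_compl] at this
  set mid := midpoint ℝ p q with hmid
  have hsub : closedBall mid (d/2) ⊆ (Aᶜ ∩ closedBall p d) ∪ (A ∩ closedBall q d) := by
    intro w hw
    have hwp : dist w p ≤ d := by
      calc dist w p ≤ dist w mid + dist mid p := dist_triangle _ _ _
        _ ≤ d/2 + d/2 := by
            apply add_le_add hw
            rw [dist_midpoint_left, show ‖(2:ℝ)‖ = 2 by norm_num]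
            rw [hd]; ring_nf; rfl
        _ = d := by ring
    have hwq : dist w q ≤ d := by
      calc dist w q ≤ dist w mid + dist mid q := dist_triangle _ _ _
        _ ≤ d/2 + d/2 := by
            apply add_le_add hw
            rw [dist_midpoint_right, show ‖(2:ℝ)‖ = 2 by norm_num]
            rw [hd]; ring_nf; rfl
        _ = d := by ring
    by_cases hwA : w ∈ A
    · exact Or.inr ⟨hwA, mem_closedBall.2 hwq⟩
    · exact Or.inl ⟨hwA, mem_closedBall.2 hwp⟩
  have hballvol : volume (closedBall mid (d/2)) =
      ENNReal.ofReal ((d/2) ^ N) * volume (ball (0:E) 1) := by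
    rw [Measure.addHaar_closedBall volume mid (by linarith : (0:ℝ) ≤ d/2),
      finrank_euclideanSpace_fin]
  have hchain : ENNReal.ofReal ((d/2) ^ N) * volume (ball (0:E) 1) ≤
      2 * (ENNReal.ofReal M * ENNReal.ofReal (d ^ P)) := by
    rw [← hballvol]
    calc volume (closedBall mid (d/2))
        ≤ volume ((Aᶜ ∩ closedBall p d) ∪ (A ∩ closedBall q d)) := measure_mono hsub
      _ ≤ volume (Aᶜ ∩ closedBall p d) + volume (A ∩ closedBall q d) := measure_union_le _ _
      _ ≤ ENNReal.ofReal M * ENNReal.ofReal (d ^ P) + ENNReal.ofReal M * ENNReal.ofReal (d ^ P) :=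
          add_le_add h1 h2
      _ = 2 * (ENNReal.ofReal M * ENNReal.ofReal (d ^ P)) := (two_mul _).symm
  set κ := volume (ball (0:E) 1) with hκ
  have hκt : κ ≠ ⊤ := measure_ball_lt_top.ne
  have hκ0 : 0 < κ.toReal := by
    apply ENNReal.toReal_pos _ hκt
    exact (measure_ball_pos volume 0 one_pos).ne'
  have hreal : (d/2) ^ N * κ.toReal ≤ 2 * (M * d ^ P) := by
    have ht := ENNReal.toReal_mono (by finiteness) hchain
    rw [ENNReal.toReal_mul, ENNReal.toReal_ofReal (by positivity)] at ht
    rw [ENNReal.toReal_mul, ENNReal.toReal_mul, ENNReal.toReal_ofReal (by linarith),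
      ENNReal.toReal_ofReal (by positivity)] at ht
    simpa using ht
  have hdP : d ^ P = d ^ (N:ℕ) * d ^ (2*s) := by
    rw [hPdef, Real.rpow_add hd0, Real.rpow_natCast]
  have hM0 : (0:ℝ) < M := by linarith
  have hkey : κ.toReal / 2^(N+1) / M ≤ d ^ (2*s) := by
    have hdN : (0:ℝ) < d ^ (N:ℕ) := pow_pos hd0 N
    rw [div_le_iff₀ hM0, div_le_iff₀ (by positivity : (0:ℝ) < (2:ℝ)^(N+1))]
    have expand : (d/2) ^ N * κ.toReal = d ^ (N:ℕ) * κ.toReal / 2 ^ N := by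
      rw [div_pow]; ring
    rw [expand, hdP] at hreal
    rw [div_le_iff₀ (by positivity : (0:ℝ) < (2:ℝ)^N)] at hreal
    have h5 : d ^ (N:ℕ) * κ.toReal ≤ d ^ (N:ℕ) * (d ^ (2*s) * M * 2^(N+1)) := by
      calc d ^ (N:ℕ) * κ.toReal ≤ 2*(M*(d ^ (N:ℕ) * d^(2*s)))*2^N := hreal
        _ = d ^ (N:ℕ) * (d ^ (2*s) * M * 2^(N+1)) := by ring
    exact le_of_mul_le_mul_left h5 hdN
  have hc0 : (0:ℝ) ≤ κ.toReal / 2^(N+1) / M := by positivity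
  calc (κ.toReal / 2^(N+1) / M) ^ (1/(2*s))
      ≤ (d ^ (2*s)) ^ (1/(2*s)) := Real.rpow_le_rpow hc0 hkey (by positivity)
    _ = d := by
        rw [← Real.rpow_mul hd0.le, mul_one_div_cancel (by positivity : (2:ℝ)*s ≠ 0),
          Real.rpow_one]

lemma exists_density_point {S : Set E} (hS : MeasurableSet S) (h0 : 0 < volume S)
    {η : ℝ} (hη : 0 < η) :
    ∃ x₀ ∈ S, ∃ r₀ : ℝ, 0 < r₀ ∧ ∀ r : ℝ, 0 < r → r ≤ r₀ →
      volume (Sᶜ ∩ closedBall x₀ r) ≤ ENNReal.ofReal η * volume (closedBall x₀ r) := by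
  have hae := Besicovitch.ae_tendsto_measure_inter_div (volume : Measure E) S
  have hmem : ∀ᵐ x ∂(volume : Measure E).restrict S, x ∈ S := ae_restrict_mem hS
  have hne : (volume : Measure E).restrict S ≠ 0 := by
    intro hcontra
    have : (volume : Measure E).restrict S univ = 0 := by rw [hcontra]; simp
    rw [Measure.restrict_apply_univ] at this
    exact h0.ne' this
  have : (ae ((volume : Measure E).restrict S)).NeBot := ae_neBot.2 hne
  obtain ⟨x₀, hx₀T, hx₀S⟩ := (hae.and hmem).exists
  set η' : ℝ := min (η/2) (1/2) with hη'
  have hη'pos : 0 < η' := lt_min (by linarith) one_half_pos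
  have hη'le : η' ≤ 1/2 := min_le_right _ _
  have hc1 : ENNReal.ofReal (1 - η') < 1 := by
    rw [← ENNReal.ofReal_one]
    exact ENNReal.ofReal_lt_ofReal_iff_of_nonneg (by linarith) |>.2 (by linarith)
  have hev := hx₀T.eventually (Ioi_mem_nhds hc1)
  rw [eventually_nhdsWithin_iff] at hev
  obtain ⟨ε, hεpos, hε⟩ := Metric.eventually_nhds_iff.1 hev
  refine ⟨x₀, hx₀S, ε/2, by linarith, fun r hr hrle => ?_⟩
  have hrε : dist r 0 < ε := by
    rw [Real.dist_eq, sub_zero, abs_of_pos hr]; linarith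
  have hratio : ENNReal.ofReal (1 - η') <
      volume (S ∩ closedBall x₀ r) / volume (closedBall x₀ r) := hε hrε hr
  set a := volume (S ∩ closedBall x₀ r)
  set b := volume (closedBall x₀ r)
  have hb0 : b ≠ 0 := (measure_closedBall_pos volume x₀ hr).ne'
  have hbt : b ≠ ⊤ := measure_closedBall_lt_top.ne
  have hcb : ENNReal.ofReal (1 - η') * b < a :=
    (ENNReal.lt_div_iff_mul_lt (Or.inl hb0) (Or.inl hbt)).1 hratio
  have hdecomp : a + volume (Sᶜ ∩ closedBall x₀ r) = b := by
    have h := measure_inter_add_diff (μ := (volume : Measure E)) (closedBall x₀ r) hS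
    rw [inter_comm] at h
    have h2 : Sᶜ ∩ closedBall x₀ r = closedBall x₀ r \ S := by
      rw [diff_eq, inter_comm]
    rw [h2]
    exact h
  have hx : volume (Sᶜ ∩ closedBall x₀ r) = b - a := by
    rw [← hdecomp, ENNReal.add_sub_cancel_left]
    intro hat
    exact hbt (hdecomp ▸ (by rw [hat]; exact top_add _))
  rw [hx]
  calc b - a ≤ b - ENNReal.ofReal (1 - η') * b := tsub_le_tsub_left hcb.le _
    _ = (1 - ENNReal.ofReal (1 - η')) * b := by
        rw [ENNReal.sub_mul (fun _ _ => hbt), one_mul]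
    _ = ENNReal.ofReal η' * b := by
        rw [← ENNReal.ofReal_one, ← ENNReal.ofReal_sub _ (by linarith : (0:ℝ) ≤ 1 - η')]
        norm_num
    _ ≤ ENNReal.ofReal η * b := by
        apply mul_le_mul_left
        exact ENNReal.ofReal_le_ofReal (le_trans (min_le_left _ _) (by linarith))

end Dim

section Geom

variable {m : ℕ}

lemma exists_onb (e : EuclideanSpace ℝ (Fin (m+1))) (he : ‖e‖ = 1) :
    ∃ b : OrthonormalBasis (Fin (m+1)) ℝ (EuclideanSpace ℝ (Fin (m+1))), b 0 = e := by
  have hcard : Module.finrank ℝ (EuclideanSpace ℝ (Fin (m+1))) = Fintype.card (Fin (m+1)) := by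
    simp [finrank_euclideanSpace_fin]
  have horth : Orthonormal ℝ (({0} : Set (Fin (m+1))).restrict (fun _ => e)) := by
    constructor
    · intro i; exact he
    · intro i j hij
      exact absurd (Subsingleton.elim i j) hij
  obtain ⟨b, hb⟩ := horth.exists_orthonormalBasis_extension_of_card_eq hcard
  exact ⟨b, hb 0 rfl⟩

noncomputable def Phi (b : OrthonormalBasis (Fin (m+1)) ℝ (EuclideanSpace ℝ (Fin (m+1)))) :
    ℝ × (Fin m → ℝ) → EuclideanSpace ℝ (Fin (m+1)) :=
  fun ty => b.repr.symm ((MeasurableEquiv.toLp 2 (Fin (m+1) → ℝ))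
    ((MeasurableEquiv.piFinSuccAbove (fun _ : Fin (m+1) => ℝ) 0).symm ty))

lemma measurePreserving_Phi (b : OrthonormalBasis (Fin (m+1)) ℝ (EuclideanSpace ℝ (Fin (m+1)))) :
    MeasurePreserving (Phi b) volume volume := by
  apply (b.measurePreserving_repr_symm).comp
  apply ((EuclideanSpace.volume_preserving_symm_measurableEquiv_toLp (Fin (m+1))).symm _).comp
  exact (volume_preserving_piFinSuccAbove (fun _ : Fin (m+1) => ℝ) 0).symm _

lemma Phi_repr (b : OrthonormalBasis (Fin (m+1)) ℝ (EuclideanSpace ℝ (Fin (m+1))))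
    (t : ℝ) (y : Fin m → ℝ) :
    b.repr (Phi b (t, y)) = (WithLp.equiv 2 (Fin (m+1) → ℝ)).symm (Fin.insertNth 0 t y) := by
  unfold Phi
  rw [LinearIsometryEquiv.apply_symm_apply]
  have h1 : (MeasurableEquiv.piFinSuccAbove (fun _ : Fin (m+1) => ℝ) 0).symm (t, y)
      = Fin.insertNth 0 t y := by
    rw [MeasurableEquiv.piFinSuccAbove_symm_apply]
    simp [Fin.insertNthEquiv]
  rw [h1]; rfl

lemma Phi_sub (b : OrthonormalBasis (Fin (m+1)) ℝ (EuclideanSpace ℝ (Fin (m+1))))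
    (t t' : ℝ) (y : Fin m → ℝ) :
    Phi b (t, y) - Phi b (t', y) = (t - t') • b 0 := by
  apply b.repr.injective
  rw [map_sub, Phi_repr, Phi_repr, _root_.map_smul, OrthonormalBasis.repr_self]
  ext j
  induction j using Fin.cases with
  | zero =>
      simp [Fin.insertNth_apply_same, EuclideanSpace.single_apply]
  | succ j' =>
      have hsa : (0 : Fin (m+1)).succAbove j' = j'.succ := by
        rw [Fin.succAbove_zero]
      simp only [PiLp.sub_apply, PiLp.smul_apply, smul_eq_mul]
      rw [← hsa]
      simp [Fin.insertNth_apply_succAbove, EuclideanSpace.single_apply,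
        (Fin.succAbove_ne (0 : Fin (m+1)) j').symm]

lemma Phi_dist (b : OrthonormalBasis (Fin (m+1)) ℝ (EuclideanSpace ℝ (Fin (m+1))))
    (t t' : ℝ) (y : Fin m → ℝ) :
    dist (Phi b (t, y)) (Phi b (t', y)) = |t - t'| := by
  rw [dist_eq_norm, Phi_sub, norm_smul, b.orthonormal.1 0]
  simp [Real.norm_eq_abs]

lemma slice_lintegral (b : OrthonormalBasis (Fin (m+1)) ℝ (EuclideanSpace ℝ (Fin (m+1))))
    {W : Set (EuclideanSpace ℝ (Fin (m+1)))} (hW : MeasurableSet W) :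
    ∫⁻ y : Fin m → ℝ, volume {t : ℝ | Phi b (t, y) ∈ W} = volume W := by
  have hpre : MeasurableSet ((Phi b) ⁻¹' W) := (measurePreserving_Phi b).measurable hW
  have h1 : volume ((Phi b) ⁻¹' W) = volume W :=
    (measurePreserving_Phi b).measure_preimage hW.nullMeasurableSet
  rw [← h1, Measure.volume_eq_prod, Measure.prod_apply_symm hpre]
  rfl

lemma slice_measurable (b : OrthonormalBasis (Fin (m+1)) ℝ (EuclideanSpace ℝ (Fin (m+1))))
    {W : Set (EuclideanSpace ℝ (Fin (m+1)))} (hW : MeasurableSet W) :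
    Measurable (fun y : Fin m → ℝ => volume {t : ℝ | Phi b (t, y) ∈ W}) := by
  have hpre : MeasurableSet ((Phi b) ⁻¹' W) := (measurePreserving_Phi b).measurable hW
  exact measurable_measure_prodMk_right hpre

lemma line_bad_segment (b : OrthonormalBasis (Fin (m+1)) ℝ (EuclideanSpace ℝ (Fin (m+1))))
    {GA GC Bad : Set (EuclideanSpace ℝ (Fin (m+1)))} {δ : ℝ} (hδ : 0 < δ)
    (hgap : ∀ p ∈ GA, ∀ q ∈ GC, δ ≤ dist p q)
    (hcover : ∀ w, w ∉ Bad → w ∈ GA ∪ GC)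
    {y : Fin m → ℝ} {tx tz : ℝ} (hx : Phi b (tx, y) ∈ GA) (hz : Phi b (tz, y) ∈ GC) :
    ∃ c : ℝ, Ioo (c - δ/2) (c + δ/2) ⊆ {t : ℝ | Phi b (t, y) ∈ Bad} := by
  classical
  set U : Set (EuclideanSpace ℝ (Fin (m+1))) := ⋃ p ∈ GA, ball p (δ/2) with hU
  set V : Set (EuclideanSpace ℝ (Fin (m+1))) := ⋃ q ∈ GC, ball q (δ/2) with hV
  have hUopen : IsOpen U := isOpen_biUnion (fun _ _ => isOpen_ball)
  have hVopen : IsOpen V := isOpen_biUnion (fun _ _ => isOpen_ball)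
  have hdisj : U ∩ V = ∅ := by
    ext w
    simp only [mem_inter_iff, mem_empty_iff_false, iff_false, not_and]
    intro hwU hwV
    obtain ⟨p, hpGA, hwp⟩ := by simpa only [hU, mem_iUnion, exists_prop] using hwU
    obtain ⟨q, hqGC, hwq⟩ := by simpa only [hV, mem_iUnion, exists_prop] using hwV
    have := hgap p hpGA q hqGC
    have hlt : dist p q < δ := by
      calc dist p q ≤ dist p w + dist w q := dist_triangle _ _ _
        _ < δ/2 + δ/2 := add_lt_add (by rw [dist_comm]; exact mem_ball.1 hwp) (mem_ball.1 hwq)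
        _ = δ := by ring
    linarith
  have hline : ∀ t : ℝ, Phi b (t, y) = Phi b (0, y) + t • b 0 := by
    intro t
    have h := Phi_sub b t 0 y
    rw [sub_eq_iff_eq_add] at h
    rw [h, sub_zero]
    abel
  have hfun : (fun t : ℝ => Phi b (t, y)) = fun t : ℝ => Phi b (0, y) + t • b 0 :=
    funext hline
  have hcont : Continuous fun t : ℝ => Phi b (t, y) := by
    rw [hfun]
    exact continuous_const.add (continuous_id.smul continuous_const)
  set U' : Set ℝ := (fun t : ℝ => Phi b (t, y)) ⁻¹' U with hU'
  set V' : Set ℝ := (fun t : ℝ => Phi b (t, y)) ⁻¹' V with hV'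
  have hU'open : IsOpen U' := hUopen.preimage hcont
  have hV'open : IsOpen V' := hVopen.preimage hcont
  have hnotsub : ¬ (uIcc tx tz ⊆ U' ∪ V') := by
    intro hsub
    have h1 : (uIcc tx tz ∩ U').Nonempty := by
      refine ⟨tx, left_mem_uIcc, ?_⟩
      simp only [hU', mem_preimage, hU, mem_iUnion, exists_prop]
      exact ⟨_, hx, mem_ball_self (by linarith)⟩
    have h2 : (uIcc tx tz ∩ V').Nonempty := by
      refine ⟨tz, right_mem_uIcc, ?_⟩
      simp only [hV', mem_preimage, hV, mem_iUnion, exists_prop]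
      exact ⟨_, hz, mem_ball_self (by linarith)⟩
    obtain ⟨c, hc⟩ := isPreconnected_uIcc U' V' hU'open hV'open hsub h1 h2
    have : Phi b (c, y) ∈ U ∩ V := ⟨hc.2.1, hc.2.2⟩
    rw [hdisj] at this
    exact this
  rw [Set.not_subset] at hnotsub
  obtain ⟨c, hcK, hcnot⟩ := hnotsub
  have hcU : c ∉ U' := fun h => hcnot (Or.inl h)
  have hcV : c ∉ V' := fun h => hcnot (Or.inr h)
  refine ⟨c, fun t ht => ?_⟩
  by_contra hbad
  have hdist : dist (Phi b (c, y)) (Phi b (t, y)) < δ/2 := by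
    rw [Phi_dist]
    rw [mem_Ioo] at ht
    rw [abs_lt]
    constructor <;> [linarith [ht.2]; linarith [ht.1]]
  rcases hcover _ hbad with hwA | hwC
  · apply hcU
    simp only [hU', mem_preimage, hU, mem_iUnion, exists_prop]
    exact ⟨_, hwA, hdist⟩
  · apply hcV
    simp only [hV', mem_preimage, hV, mem_iUnion, exists_prop]
    exact ⟨_, hwC, hdist⟩

end Geom

lemma dyadic_sum {α : Type*} [MeasurableSpace α] {μ : Measure α} {g : α → ℝ≥0∞}
    (hg : Measurable g) {M₂ : ℝ} (hM₂ : 0 ≤ M₂) {ε : ℝ≥0∞} (K : ℕ)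
    (hterm : ∀ k : ℕ, ε ≤ ENNReal.ofReal (M₂ * 2^k) * μ {x | ENNReal.ofReal (M₂*2^k) < g x}) :
    (K : ℝ≥0∞) * ε ≤ 2 * ∫⁻ x, g x ∂μ := by
  classical
  have hSm : ∀ k : ℕ, MeasurableSet {x | ENNReal.ofReal (M₂*2^k) < g x} :=
    fun k => measurableSet_lt measurable_const hg
  have hpt : ∀ x, (∑ k ∈ Finset.range K,
      ({x | ENNReal.ofReal (M₂*2^k) < g x}).indicator (fun _ => ENNReal.ofReal (M₂*2^k)) x)
      ≤ 2 * g x := by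
    intro x
    have hind : ∀ k, ({x | ENNReal.ofReal (M₂*2^k) < g x}).indicator
        (fun _ => ENNReal.ofReal (M₂*2^k)) x
        = if ENNReal.ofReal (M₂*2^k) < g x then ENNReal.ofReal (M₂*2^k) else 0 := by
      intro k
      by_cases h : ENNReal.ofReal (M₂*2^k) < g x
      · have hx : x ∈ {x | ENNReal.ofReal (M₂*2^k) < g x} := h
        rw [if_pos h, Set.indicator_of_mem hx]
      · have hx : x ∉ {x | ENNReal.ofReal (M₂*2^k) < g x} := h
        rw [if_neg h, Set.indicator_of_notMem hx]
    simp only [hind]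
    rw [Finset.sum_ite, Finset.sum_const_zero, add_zero]
    set T := (Finset.range K).filter (fun k => ENNReal.ofReal (M₂*2^k) < g x) with hT
    rcases T.eq_empty_or_nonempty with hTe | hTne
    · rw [hTe]; simp
    · set j := T.max' hTne with hj
      have hjT : j ∈ T := T.max'_mem hTne
      have hjlt : ENNReal.ofReal (M₂*2^j) < g x := (Finset.mem_filter.1 hjT).2
      have hsub : T ⊆ Finset.range (j+1) := by
        intro k hk
        rw [Finset.mem_range, Nat.lt_succ_iff]
        exact T.le_max' k hk
      calc ∑ k ∈ T, ENNReal.ofReal (M₂*2^k)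
          ≤ ∑ k ∈ Finset.range (j+1), ENNReal.ofReal (M₂*2^k) :=
            Finset.sum_le_sum_of_subset hsub
        _ = ENNReal.ofReal (∑ k ∈ Finset.range (j+1), M₂*2^k) :=
            (ENNReal.ofReal_sum_of_nonneg (fun i _ => by positivity)).symm
        _ ≤ ENNReal.ofReal (2 * (M₂ * 2^j)) := by
            apply ENNReal.ofReal_le_ofReal
            rw [← Finset.mul_sum, geom_sum_eq (by norm_num : (2:ℝ) ≠ 1)]
            have h2j : (0:ℝ) ≤ 2^j := by positivity
            have : ((2:ℝ)^(j+1) - 1)/(2-1) = 2*2^j - 1 := by ring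
            rw [this]
            nlinarith
        _ = 2 * ENNReal.ofReal (M₂ * 2^j) := by
            rw [ENNReal.ofReal_mul (by norm_num : (0:ℝ) ≤ 2), ENNReal.ofReal_ofNat]
        _ ≤ 2 * g x := mul_le_mul_right hjlt.le _
  have hint : ∑ k ∈ Finset.range K,
      ENNReal.ofReal (M₂*2^k) * μ {x | ENNReal.ofReal (M₂*2^k) < g x} ≤ 2 * ∫⁻ x, g x ∂μ := by
    have heq : ∀ k : ℕ, ENNReal.ofReal (M₂*2^k) * μ {x | ENNReal.ofReal (M₂*2^k) < g x}
        = ∫⁻ x, ({x | ENNReal.ofReal (M₂*2^k) < g x}).indicator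
            (fun _ => ENNReal.ofReal (M₂*2^k)) x ∂μ := by
      intro k
      rw [lintegral_indicator_const (hSm k)]
    calc ∑ k ∈ Finset.range K, ENNReal.ofReal (M₂*2^k) * μ {x | ENNReal.ofReal (M₂*2^k) < g x}
        = ∑ k ∈ Finset.range K, ∫⁻ x, ({x | ENNReal.ofReal (M₂*2^k) < g x}).indicator
            (fun _ => ENNReal.ofReal (M₂*2^k)) x ∂μ := Finset.sum_congr rfl (fun k _ => heq k)
      _ = ∫⁻ x, ∑ k ∈ Finset.range K, ({x | ENNReal.ofReal (M₂*2^k) < g x}).indicator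
            (fun _ => ENNReal.ofReal (M₂*2^k)) x ∂μ :=
          (lintegral_finset_sum _ (fun k _ => (measurable_const.indicator (hSm k)))).symm
      _ ≤ ∫⁻ x, 2 * g x ∂μ := lintegral_mono hpt
      _ = 2 * ∫⁻ x, g x ∂μ := lintegral_const_mul 2 hg
  calc (K : ℝ≥0∞) * ε = ∑ _k ∈ Finset.range K, ε := by
        rw [Finset.sum_const, Finset.card_range, nsmul_eq_mul]
    _ ≤ ∑ k ∈ Finset.range K, ENNReal.ofReal (M₂*2^k) * μ {x | ENNReal.ofReal (M₂*2^k) < g x} :=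
        Finset.sum_le_sum (fun k _ => hterm k)
    _ ≤ 2 * ∫⁻ x, g x ∂μ := hint


end Stmt9Aux

open MeasureTheory

set_option maxHeartbeats 2000000 in
/-- If `A ⊆ ℝ^n` and its complement both have positive measure, then the indicator function
`𝟙_A` does not belong to `H^s(ℝ^n)` for any `s ≥ 1/2`; in particular `𝟙_A ∉ H^{1/2}`. -/
theorem stmt9 {n : ℕ} (hn : 0 < n) (A : Set (EuclideanSpace ℝ (Fin n)))
    (hA : MeasurableSet A) (hA1 : 0 < volume A) (hA2 : 0 < volume Aᶜ) :
    ∀ s : ℝ, 1 / 2 ≤ s → ¬ MemHs s (A.indicator (fun _ => (1 : ℝ))) := by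
  obtain ⟨m, rfl⟩ : ∃ m, n = m + 1 := ⟨n - 1, (Nat.succ_pred_eq_of_pos hn).symm⟩
  intro s hs hMem
  have hs0 : (0:ℝ) < s := lt_of_lt_of_le one_half_pos hs
  obtain ⟨-, hI⟩ := hMem
  classical
  set P : ℝ := ((m+1 : ℕ) : ℝ) + 2*s with hPdef
  set g := Stmt9Aux.gf A P with hgdef
  have hI' : (∫⁻ x, g x) < ⊤ := hI
  have hgmeas : Measurable g := Stmt9Aux.measurable_gf hA P
  set I := ∫⁻ x, g x with hIdef
  have hIne : I ≠ ⊤ := hI'.ne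
  -- constants
  set κ := volume (ball (0 : EuclideanSpace ℝ (Fin (m+1))) 1) with hκdef
  have hκ0 : 0 < κ.toReal :=
    ENNReal.toReal_pos (measure_ball_pos volume 0 one_pos).ne' measure_ball_lt_top.ne
  set c₀ : ℝ := κ.toReal / 2^(m+1+1) with hc₀def
  have hc₀pos : 0 < c₀ := by rw [hc₀def]; positivity
  -- density points
  set η : ℝ := 1/(32 * 2^(m+1)) with hηdef
  have hηpos : 0 < η := by rw [hηdef]; positivity
  obtain ⟨x₀, hx₀A, r₁, hr₁, hx₀⟩ := Stmt9Aux.exists_density_point hA hA1 hηpos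
  obtain ⟨z₀, hz₀C, r₂, hr₂, hz₀⟩ := Stmt9Aux.exists_density_point hA.compl hA2 hηpos
  set r : ℝ := min r₁ r₂ with hrdef
  have hr : 0 < r := lt_min hr₁ hr₂
  have hx₀r := hx₀ r hr (min_le_left _ _)
  have hz₀r := hz₀ r hr (min_le_right _ _)
  rw [compl_compl] at hz₀r
  -- direction and adapted basis
  have hx0z0 : x₀ ≠ z₀ := fun h => hz₀C (h ▸ hx₀A)
  set d : ℝ := dist x₀ z₀ with hddef
  have hd0 : 0 < d := dist_pos.2 hx0z0
  set e := d⁻¹ • (z₀ - x₀) with hedef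
  have he : ‖e‖ = 1 := by
    rw [hedef, norm_smul, Real.norm_eq_abs, abs_of_pos (inv_pos.2 hd0)]
    rw [show ‖z₀ - x₀‖ = dist z₀ x₀ from (dist_eq_norm _ _).symm, dist_comm z₀ x₀]
    rw [← hddef, inv_mul_cancel₀ hd0.ne']
  obtain ⟨b, hb0⟩ := Stmt9Aux.exists_onb e he
  have hz₀eq : z₀ = x₀ + d • e := by
    rw [hedef, smul_smul, mul_inv_cancel₀ hd0.ne', one_smul]
    abel
  have hshift : ∀ (t : ℝ) (y : Fin m → ℝ),
      Stmt9Aux.Phi b (t, y) = Stmt9Aux.Phi b (t - d, y) + d • e := by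
    intro t y
    have h := Stmt9Aux.Phi_sub b t (t - d) y
    rw [show t - (t - d) = d by ring, hb0] at h
    rw [← h]; abel
  -- balls and line family
  set B1 := closedBall x₀ (r/2) with hB1def
  set B2 := closedBall x₀ r with hB2def
  set Z2 := closedBall z₀ r with hZ2def
  have hB1m : MeasurableSet B1 := measurableSet_closedBall
  have hB2m : MeasurableSet B2 := measurableSet_closedBall
  have hZ2m : MeasurableSet Z2 := measurableSet_closedBall
  set FB1 := fun y : Fin m → ℝ => volume {t : ℝ | Stmt9Aux.Phi b (t, y) ∈ B1} with hFB1def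
  set D := {y : Fin m → ℝ | 0 < FB1 y} with hDdef
  have hDm : MeasurableSet D :=
    measurableSet_lt measurable_const (Stmt9Aux.slice_measurable b hB1m)
  have hFB1le : ∀ y, FB1 y ≤ D.indicator (fun _ => ENNReal.ofReal (2*r)) y := by
    intro y
    by_cases hyD : y ∈ D
    · rw [Set.indicator_of_mem hyD]
      rcases ({t : ℝ | Stmt9Aux.Phi b (t, y) ∈ B1}).eq_empty_or_nonempty with hemp | ⟨t₀, ht₀⟩
      · simp only [hFB1def]
        rw [hemp]
        simp
      · have hsub : {t : ℝ | Stmt9Aux.Phi b (t, y) ∈ B1} ⊆ Icc (t₀ - r) (t₀ + r) := by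
          intro t ht
          have hd1 : dist (Stmt9Aux.Phi b (t,y)) (Stmt9Aux.Phi b (t₀,y)) ≤ r := by
            calc dist (Stmt9Aux.Phi b (t,y)) (Stmt9Aux.Phi b (t₀,y))
                ≤ dist (Stmt9Aux.Phi b (t,y)) x₀ + dist x₀ (Stmt9Aux.Phi b (t₀,y)) :=
                  dist_triangle _ _ _
              _ ≤ r/2 + r/2 := by
                  apply add_le_add (mem_closedBall.1 ht)
                  rw [dist_comm]
                  exact mem_closedBall.1 ht₀
              _ = r := by ring
          rw [Stmt9Aux.Phi_dist] at hd1
          rw [mem_Icc]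
          rw [abs_le] at hd1
          constructor <;> linarith [hd1.1, hd1.2]
        calc FB1 y ≤ volume (Icc (t₀ - r) (t₀ + r)) := measure_mono hsub
          _ = ENNReal.ofReal (2*r) := by rw [Real.volume_Icc]; congr 1; ring
    · rw [Set.indicator_of_notMem hyD]
      have : ¬ (0 < FB1 y) := hyD
      simpa using not_lt.1 this
  have hKR : volume B1 ≤ ENNReal.ofReal (2*r) * volume D := by
    calc volume B1 = ∫⁻ y, FB1 y := (Stmt9Aux.slice_lintegral b hB1m).symm
      _ ≤ ∫⁻ y, D.indicator (fun _ => ENNReal.ofReal (2*r)) y := lintegral_mono hFB1le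
      _ = ENNReal.ofReal (2*r) * volume D := lintegral_indicator_const hDm _
  set β := volume B1 * (ENNReal.ofReal (4*r))⁻¹ with hβdef
  have hβ0 : β ≠ 0 := by
    apply mul_ne_zero
    · exact (measure_closedBall_pos volume x₀ (by linarith)).ne'
    · exact ENNReal.inv_ne_zero.2 ofReal_ne_top
  have hβt : β ≠ ⊤ := by
    apply ENNReal.mul_ne_top measure_closedBall_lt_top.ne
    rw [ENNReal.inv_ne_top]
    exact (ENNReal.ofReal_pos.2 (by linarith)).ne'
  have h4r2r : ENNReal.ofReal (4*r) = 2 * ENNReal.ofReal (2*r) := by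
    rw [show (4:ℝ)*r = 2*(2*r) by ring, ENNReal.ofReal_mul (by norm_num : (0:ℝ) ≤ 2),
      ENNReal.ofReal_ofNat]
  have hD2β : 2 * β ≤ volume D := by
    have h2rne : ENNReal.ofReal (2*r) ≠ 0 := (ENNReal.ofReal_pos.2 (by linarith)).ne'
    have heq : 2 * β = volume B1 * (ENNReal.ofReal (2*r))⁻¹ := by
      rw [hβdef, h4r2r, ENNReal.mul_inv (Or.inl (by norm_num)) (Or.inl ENNReal.ofNat_ne_top)]
      rw [show (2:ℝ≥0∞) * (volume B1 * (2⁻¹ * (ENNReal.ofReal (2*r))⁻¹))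
          = (2 * 2⁻¹) * (volume B1 * (ENNReal.ofReal (2*r))⁻¹) by ring]
      rw [ENNReal.mul_inv_cancel (by norm_num) ENNReal.ofNat_ne_top, one_mul]
    rw [heq]
    calc volume B1 * (ENNReal.ofReal (2*r))⁻¹
        ≤ (ENNReal.ofReal (2*r) * volume D) * (ENNReal.ofReal (2*r))⁻¹ :=
          mul_le_mul_left hKR _
      _ = volume D * (ENNReal.ofReal (2*r) * (ENNReal.ofReal (2*r))⁻¹) := by ring
      _ = volume D := by rw [ENNReal.mul_inv_cancel h2rne ofReal_ne_top, mul_one]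
  -- good lines G
  set FAc := fun y : Fin m → ℝ => volume {t : ℝ | Stmt9Aux.Phi b (t, y) ∈ Aᶜ ∩ B2} with hFAcdef
  set FAz := fun y : Fin m → ℝ => volume {t : ℝ | Stmt9Aux.Phi b (t, y) ∈ A ∩ Z2} with hFAzdef
  set G := (D ∩ {y | FAc y ≤ ENNReal.ofReal (r/4)}) ∩ {y | FAz y ≤ ENNReal.ofReal (r/4)} with hGdef
  have hr4ne0 : ENNReal.ofReal (r/4) ≠ 0 := (ENNReal.ofReal_pos.2 (by linarith)).ne'
  have hmarkAc : volume {y : Fin m → ℝ | ENNReal.ofReal (r/4) < FAc y}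
      ≤ (ENNReal.ofReal (r/4))⁻¹ * (ENNReal.ofReal η * volume B2) := by
    apply Stmt9Aux.ennreal_le_inv_mul hr4ne0 ofReal_ne_top
    calc ENNReal.ofReal (r/4) * volume {y | ENNReal.ofReal (r/4) < FAc y}
        ≤ ENNReal.ofReal (r/4) * volume {y | ENNReal.ofReal (r/4) ≤ FAc y} := by
          apply mul_le_mul_right
          exact measure_mono (Set.setOf_subset_setOf.2 (fun y hy => le_of_lt hy))
      _ ≤ ∫⁻ y, FAc y := mul_meas_ge_le_lintegral (Stmt9Aux.slice_measurable b (hA.compl.inter hB2m)) _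
      _ = volume (Aᶜ ∩ B2) := Stmt9Aux.slice_lintegral b (hA.compl.inter hB2m)
      _ ≤ ENNReal.ofReal η * volume B2 := hx₀r
  have hmarkAz : volume {y : Fin m → ℝ | ENNReal.ofReal (r/4) < FAz y}
      ≤ (ENNReal.ofReal (r/4))⁻¹ * (ENNReal.ofReal η * volume Z2) := by
    apply Stmt9Aux.ennreal_le_inv_mul hr4ne0 ofReal_ne_top
    calc ENNReal.ofReal (r/4) * volume {y | ENNReal.ofReal (r/4) < FAz y}
        ≤ ENNReal.ofReal (r/4) * volume {y | ENNReal.ofReal (r/4) ≤ FAz y} := by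
          apply mul_le_mul_right
          exact measure_mono (Set.setOf_subset_setOf.2 (fun y hy => le_of_lt hy))
      _ ≤ ∫⁻ y, FAz y := mul_meas_ge_le_lintegral (Stmt9Aux.slice_measurable b (hA.inter hZ2m)) _
      _ = volume (A ∩ Z2) := Stmt9Aux.slice_lintegral b (hA.inter hZ2m)
      _ ≤ ENNReal.ofReal η * volume Z2 := hz₀r
  -- volumes of the balls
  have hvolB2 : volume B2 = ENNReal.ofReal (r^(m+1)) * κ := by
    rw [hB2def, Measure.addHaar_closedBall volume x₀ hr.le, finrank_euclideanSpace_fin, hκdef]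
  have hvolZ2 : volume Z2 = ENNReal.ofReal (r^(m+1)) * κ := by
    rw [hZ2def, Measure.addHaar_closedBall volume z₀ hr.le, finrank_euclideanSpace_fin, hκdef]
  have hvolB1 : volume B1 = ENNReal.ofReal ((r/2)^(m+1)) * κ := by
    rw [hB1def, Measure.addHaar_closedBall volume x₀ (by linarith : (0:ℝ) ≤ r/2),
      finrank_euclideanSpace_fin, hκdef]
  have hDGbound : volume (D \ G) ≤ β := by
    have hsplit : D \ G ⊆ {y | ENNReal.ofReal (r/4) < FAc y} ∪ {y | ENNReal.ofReal (r/4) < FAz y} := by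
      intro y hy
      obtain ⟨hyD, hyG⟩ := hy
      rw [hGdef] at hyG
      by_cases h1 : FAc y ≤ ENNReal.ofReal (r/4)
      · by_cases h2 : FAz y ≤ ENNReal.ofReal (r/4)
        · exact absurd ⟨⟨hyD, h1⟩, h2⟩ hyG
        · exact Or.inr (not_le.1 h2)
      · exact Or.inl (not_le.1 h1)
    calc volume (D \ G)
        ≤ volume ({y : Fin m → ℝ | ENNReal.ofReal (r/4) < FAc y}
            ∪ {y : Fin m → ℝ | ENNReal.ofReal (r/4) < FAz y}) := measure_mono hsplit
      _ ≤ volume {y : Fin m → ℝ | ENNReal.ofReal (r/4) < FAc y}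
            + volume {y : Fin m → ℝ | ENNReal.ofReal (r/4) < FAz y} := measure_union_le _ _
      _ ≤ (ENNReal.ofReal (r/4))⁻¹ * (ENNReal.ofReal η * volume B2)
            + (ENNReal.ofReal (r/4))⁻¹ * (ENNReal.ofReal η * volume Z2) := add_le_add hmarkAc hmarkAz
      _ = ENNReal.ofReal ((r/4)⁻¹ * (η * (2 * r^(m+1)))) * κ := by
          rw [hvolB2, hvolZ2, ← ENNReal.ofReal_inv_of_pos (by linarith : (0:ℝ) < r/4)]
          rw [ENNReal.ofReal_mul (by positivity), ENNReal.ofReal_mul (by positivity),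
            ENNReal.ofReal_mul (by norm_num : (0:ℝ) ≤ 2), ENNReal.ofReal_ofNat]
          ring
      _ ≤ ENNReal.ofReal ((r/2)^(m+1) * (4*r)⁻¹) * κ := by
          apply mul_le_mul_left
          apply ENNReal.ofReal_le_ofReal
          rw [hηdef]
          rw [div_pow]
          field_simp
          norm_num
      _ = β := by
          rw [hβdef, hvolB1, ← ENNReal.ofReal_inv_of_pos (by linarith : (0:ℝ) < 4*r),
            ENNReal.ofReal_mul (by positivity)]
          ring
  have hGβ : β ≤ volume G := by
    have hGsubD : G ⊆ D := fun y hy => hy.1.1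
    have h1 : volume D ≤ volume G + volume (D \ G) := by
      have := measure_le_inter_add_diff (volume : Measure (Fin m → ℝ)) D G
      rwa [inter_eq_self_of_subset_right hGsubD] at this
    have h2 : β + β ≤ volume G + β := by
      calc β + β = 2 * β := (two_mul β).symm
        _ ≤ volume D := hD2β
        _ ≤ volume G + volume (D \ G) := h1
        _ ≤ volume G + β := add_le_add_right hDGbound _
    exact (ENNReal.add_le_add_iff_right hβt).1 h2
  -- main stage estimate
  have hβ2t : β/2 ≠ ⊤ := ne_top_of_le_ne_top hβt ENNReal.half_le_self
  have hβ20 : β/2 ≠ 0 := by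
    rw [ENNReal.div_ne_zero]
    exact ⟨hβ0, ENNReal.ofNat_ne_top⟩
  have stage : ∀ M : ℝ, 1 ≤ M → c₀ ≤ M →
      I * (ENNReal.ofReal (r/4))⁻¹ ≤ β/2 * ENNReal.ofReal M →
      ENNReal.ofReal c₀ * (ENNReal.ofReal M)⁻¹ * (β/2)
        ≤ volume {x : EuclideanSpace ℝ (Fin (m+1)) | ENNReal.ofReal M < g x} := by
    intro M hM1 hMc₀ hMbig
    set SM := {x : EuclideanSpace ℝ (Fin (m+1)) | ENNReal.ofReal M < g x} with hSMdef
    have hSMm : MeasurableSet SM := measurableSet_lt measurable_const hgmeas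
    set FS := fun y : Fin m → ℝ => volume {t : ℝ | Stmt9Aux.Phi b (t, y) ∈ SM} with hFSdef
    have hFSmeas : Measurable FS := Stmt9Aux.slice_measurable b hSMm
    have hMne0 : ENNReal.ofReal M ≠ 0 := (ENNReal.ofReal_pos.2 (by linarith)).ne'
    have hcheb : volume SM ≤ (ENNReal.ofReal M)⁻¹ * I := by
      apply Stmt9Aux.ennreal_le_inv_mul hMne0 ofReal_ne_top
      calc ENNReal.ofReal M * volume SM
          ≤ ENNReal.ofReal M * volume {x | ENNReal.ofReal M ≤ g x} := by
            apply mul_le_mul_right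
            exact measure_mono (Set.setOf_subset_setOf.2 (fun x hx => le_of_lt hx))
        _ ≤ I := mul_meas_ge_le_lintegral hgmeas _
    set bad := {y : Fin m → ℝ | ENNReal.ofReal (r/4) ≤ FS y} with hbaddef
    have hbadle : volume bad ≤ β/2 := by
      have h1 : ENNReal.ofReal (r/4) * volume bad ≤ volume SM := by
        have h := mul_meas_ge_le_lintegral (μ := (volume : Measure (Fin m → ℝ))) hFSmeas (ENNReal.ofReal (r/4))
        rwa [Stmt9Aux.slice_lintegral b hSMm] at h
      have h2 : volume bad ≤ (ENNReal.ofReal (r/4))⁻¹ * volume SM :=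
        Stmt9Aux.ennreal_le_inv_mul hr4ne0 ofReal_ne_top h1
      calc volume bad ≤ (ENNReal.ofReal (r/4))⁻¹ * ((ENNReal.ofReal M)⁻¹ * I) :=
            le_trans h2 (mul_le_mul_right hcheb _)
        _ = (I * (ENNReal.ofReal (r/4))⁻¹) * (ENNReal.ofReal M)⁻¹ := by ring
        _ ≤ (β/2 * ENNReal.ofReal M) * (ENNReal.ofReal M)⁻¹ := mul_le_mul_left hMbig _
        _ = β/2 * (ENNReal.ofReal M * (ENNReal.ofReal M)⁻¹) := by ring
        _ = β/2 := by rw [ENNReal.mul_inv_cancel hMne0 ofReal_ne_top, mul_one]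
    have hG'ge : β/2 ≤ volume (G \ bad) := by
      have hsplit : volume G ≤ volume (G ∩ bad) + volume (G \ bad) :=
        measure_le_inter_add_diff _ _ _
      have h2 : β/2 + β/2 ≤ volume (G \ bad) + β/2 := by
        rw [ENNReal.add_halves]
        calc β ≤ volume G := hGβ
          _ ≤ volume (G ∩ bad) + volume (G \ bad) := hsplit
          _ ≤ volume bad + volume (G \ bad) :=
              add_le_add_left (measure_mono inter_subset_right) _
          _ ≤ β/2 + volume (G \ bad) := add_le_add_left hbadle _
          _ = volume (G \ bad) + β/2 := add_comm _ _
      exact (ENNReal.add_le_add_iff_right hβ2t).1 h2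
    set δM := (c₀ / M) ^ (1/(2*s)) with hδMdef
    have hδMpos : 0 < δM := Real.rpow_pos_of_pos (div_pos hc₀pos (by linarith)) _
    have hFSlow : ∀ y ∈ G \ bad, ENNReal.ofReal δM ≤ FS y := by
      intro y hy
      obtain ⟨hyG, hybad⟩ := hy
      obtain ⟨⟨hyD, hyAc⟩, hyAz⟩ := hyG
      have hFSy : FS y ≤ ENNReal.ofReal (r/4) := le_of_lt (not_le.1 hybad)
      have hFAcy : FAc y ≤ ENNReal.ofReal (r/4) := hyAc
      have hFAzy : FAz y ≤ ENNReal.ofReal (r/4) := hyAz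
      have hne : {t : ℝ | Stmt9Aux.Phi b (t,y) ∈ B1}.Nonempty :=
        nonempty_of_measure_ne_zero (hyD : 0 < FB1 y).ne'
      obtain ⟨t₀, ht₀⟩ := hne
      -- find a good point of A on the line
      have hxA : ∃ tx : ℝ, Stmt9Aux.Phi b (tx, y) ∈ A ∧
          g (Stmt9Aux.Phi b (tx,y)) ≤ ENNReal.ofReal M := by
        by_contra hcon
        push_neg at hcon
        have hsubJ : Icc (t₀ - r/2) (t₀ + r/2) ⊆
            {t : ℝ | Stmt9Aux.Phi b (t,y) ∈ Aᶜ ∩ B2} ∪ {t : ℝ | Stmt9Aux.Phi b (t,y) ∈ SM} := by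
          intro t ht
          have hB2t : Stmt9Aux.Phi b (t,y) ∈ B2 := by
            rw [hB2def, mem_closedBall]
            calc dist (Stmt9Aux.Phi b (t,y)) x₀
                ≤ dist (Stmt9Aux.Phi b (t,y)) (Stmt9Aux.Phi b (t₀,y))
                  + dist (Stmt9Aux.Phi b (t₀,y)) x₀ := dist_triangle _ _ _
              _ ≤ r/2 + r/2 := by
                  apply add_le_add
                  · rw [Stmt9Aux.Phi_dist]
                    rw [mem_Icc] at ht
                    rw [abs_le]
                    constructor <;> linarith [ht.1, ht.2]
                  · exact mem_closedBall.1 ht₀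
              _ = r := by ring
          by_cases htA : Stmt9Aux.Phi b (t,y) ∈ A
          · right
            exact (hcon t htA : ENNReal.ofReal M < g (Stmt9Aux.Phi b (t,y)))
          · left
            exact ⟨htA, hB2t⟩
        have hmeasJ : ENNReal.ofReal r ≤ ENNReal.ofReal (r/4) + ENNReal.ofReal (r/4) := by
          calc ENNReal.ofReal r = volume (Icc (t₀ - r/2) (t₀ + r/2)) := by
                rw [Real.volume_Icc]; congr 1; ring
            _ ≤ volume ({t : ℝ | Stmt9Aux.Phi b (t,y) ∈ Aᶜ ∩ B2}
                  ∪ {t : ℝ | Stmt9Aux.Phi b (t,y) ∈ SM}) := measure_mono hsubJ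
            _ ≤ volume {t : ℝ | Stmt9Aux.Phi b (t,y) ∈ Aᶜ ∩ B2}
                  + volume {t : ℝ | Stmt9Aux.Phi b (t,y) ∈ SM} := measure_union_le _ _
            _ ≤ ENNReal.ofReal (r/4) + ENNReal.ofReal (r/4) := add_le_add hFAcy hFSy
        rw [← ENNReal.ofReal_add (by linarith) (by linarith)] at hmeasJ
        have := (ENNReal.ofReal_le_ofReal_iff (by linarith)).1 hmeasJ
        linarith
      -- find a good point of Aᶜ on the line
      have hzC : ∃ tz : ℝ, Stmt9Aux.Phi b (tz, y) ∈ Aᶜ ∧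
          g (Stmt9Aux.Phi b (tz,y)) ≤ ENNReal.ofReal M := by
        by_contra hcon
        push_neg at hcon
        have hsubJ : Icc (t₀ + d - r/2) (t₀ + d + r/2) ⊆
            {t : ℝ | Stmt9Aux.Phi b (t,y) ∈ A ∩ Z2} ∪ {t : ℝ | Stmt9Aux.Phi b (t,y) ∈ SM} := by
          intro t ht
          have hZ2t : Stmt9Aux.Phi b (t,y) ∈ Z2 := by
            rw [hZ2def, mem_closedBall, hz₀eq, hshift t y, dist_add_right]
            calc dist (Stmt9Aux.Phi b (t - d,y)) x₀
                ≤ dist (Stmt9Aux.Phi b (t - d,y)) (Stmt9Aux.Phi b (t₀,y))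
                  + dist (Stmt9Aux.Phi b (t₀,y)) x₀ := dist_triangle _ _ _
              _ ≤ r/2 + r/2 := by
                  apply add_le_add
                  · rw [Stmt9Aux.Phi_dist]
                    rw [mem_Icc] at ht
                    rw [abs_le]
                    constructor <;> linarith [ht.1, ht.2]
                  · exact mem_closedBall.1 ht₀
              _ = r := by ring
          by_cases htA : Stmt9Aux.Phi b (t,y) ∈ A
          · left
            exact ⟨htA, hZ2t⟩
          · right
            exact (hcon t htA : ENNReal.ofReal M < g (Stmt9Aux.Phi b (t,y)))
        have hmeasJ : ENNReal.ofReal r ≤ ENNReal.ofReal (r/4) + ENNReal.ofReal (r/4) := by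
          calc ENNReal.ofReal r = volume (Icc (t₀ + d - r/2) (t₀ + d + r/2)) := by
                rw [Real.volume_Icc]; congr 1; ring
            _ ≤ volume ({t : ℝ | Stmt9Aux.Phi b (t,y) ∈ A ∩ Z2}
                  ∪ {t : ℝ | Stmt9Aux.Phi b (t,y) ∈ SM}) := measure_mono hsubJ
            _ ≤ volume {t : ℝ | Stmt9Aux.Phi b (t,y) ∈ A ∩ Z2}
                  + volume {t : ℝ | Stmt9Aux.Phi b (t,y) ∈ SM} := measure_union_le _ _
            _ ≤ ENNReal.ofReal (r/4) + ENNReal.ofReal (r/4) := add_le_add hFAzy hFSy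
        rw [← ENNReal.ofReal_add (by linarith) (by linarith)] at hmeasJ
        have := (ENNReal.ofReal_le_ofReal_iff (by linarith)).1 hmeasJ
        linarith
      obtain ⟨tx, htxA, htxg⟩ := hxA
      obtain ⟨tz, htzC, htzg⟩ := hzC
      -- the gap property
      have hgapAll : ∀ p ∈ {p : EuclideanSpace ℝ (Fin (m+1)) | p ∈ A ∧ g p ≤ ENNReal.ofReal M},
          ∀ q ∈ {q : EuclideanSpace ℝ (Fin (m+1)) | q ∈ Aᶜ ∧ g q ≤ ENNReal.ofReal M},
          δM ≤ dist p q := by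
        intro p hp q hq
        have hres := Stmt9Aux.gap hA hs hM1 hp.1 hq.1 hp.2 hq.2
        exact hres
      have hcover : ∀ w : EuclideanSpace ℝ (Fin (m+1)), w ∉ SM →
          w ∈ {p : EuclideanSpace ℝ (Fin (m+1)) | p ∈ A ∧ g p ≤ ENNReal.ofReal M}
            ∪ {q : EuclideanSpace ℝ (Fin (m+1)) | q ∈ Aᶜ ∧ g q ≤ ENNReal.ofReal M} := by
        intro w hw
        have hgw : g w ≤ ENNReal.ofReal M := not_lt.1 hw
        by_cases hwA : w ∈ A
        · exact Or.inl ⟨hwA, hgw⟩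
        · exact Or.inr ⟨hwA, hgw⟩
      obtain ⟨c, hc⟩ := Stmt9Aux.line_bad_segment b hδMpos hgapAll hcover
        (show Stmt9Aux.Phi b (tx, y) ∈
          {p : EuclideanSpace ℝ (Fin (m+1)) | p ∈ A ∧ g p ≤ ENNReal.ofReal M} from ⟨htxA, htxg⟩)
        (show Stmt9Aux.Phi b (tz, y) ∈
          {q : EuclideanSpace ℝ (Fin (m+1)) | q ∈ Aᶜ ∧ g q ≤ ENNReal.ofReal M} from ⟨htzC, htzg⟩)
      calc ENNReal.ofReal δM = volume (Ioo (c - δM/2) (c + δM/2)) := by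
            rw [Real.volume_Ioo]; congr 1; ring
        _ ≤ FS y := measure_mono hc
    have hint : ENNReal.ofReal δM * (β/2) ≤ volume SM := by
      calc ENNReal.ofReal δM * (β/2) ≤ ENNReal.ofReal δM * volume (G \ bad) :=
            mul_le_mul_right hG'ge _
        _ = ∫⁻ _ in G \ bad, ENNReal.ofReal δM := by rw [setLIntegral_const, mul_comm]
        _ ≤ ∫⁻ y in G \ bad, FS y := setLIntegral_mono hFSmeas hFSlow
        _ ≤ ∫⁻ y, FS y := setLIntegral_le_lintegral _ _
        _ = volume SM := Stmt9Aux.slice_lintegral b hSMm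
    have hδMge : ENNReal.ofReal (c₀ / M) ≤ ENNReal.ofReal δM := by
      apply ENNReal.ofReal_le_ofReal
      rw [hδMdef]
      have hMpos : (0:ℝ) < M := by linarith
      have hbasepos : 0 < c₀/M := div_pos hc₀pos hMpos
      have hbase1 : c₀/M ≤ 1 := (div_le_one hMpos).2 hMc₀
      calc c₀/M = (c₀/M) ^ (1:ℝ) := (Real.rpow_one _).symm
        _ ≤ (c₀/M) ^ (1/(2*s)) := by
            apply Real.rpow_le_rpow_of_exponent_ge hbasepos hbase1
            rw [div_le_one (by positivity)]
            linarith
    calc ENNReal.ofReal c₀ * (ENNReal.ofReal M)⁻¹ * (β/2)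
        = ENNReal.ofReal (c₀/M) * (β/2) := by
          have hsplitdiv : ENNReal.ofReal (c₀/M) = ENNReal.ofReal c₀ * (ENNReal.ofReal M)⁻¹ := by
            rw [div_eq_mul_inv, ENNReal.ofReal_mul hc₀pos.le,
              ENNReal.ofReal_inv_of_pos (by linarith : (0:ℝ) < M)]
          rw [hsplitdiv]
      _ ≤ ENNReal.ofReal δM * (β/2) := mul_le_mul_left hδMge _
      _ ≤ volume SM := hint
  -- choose the threshold and conclude
  set C := I * (ENNReal.ofReal (r/4))⁻¹ with hCdef
  have hCt : C ≠ ⊤ := ENNReal.mul_ne_top hIne (ENNReal.inv_ne_top.2 hr4ne0)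
  have hCdivt : C / (β/2) ≠ ⊤ := ENNReal.mul_ne_top hCt (ENNReal.inv_ne_top.2 hβ20)
  set M₂ : ℝ := max (max 1 c₀) ((C / (β/2)).toReal + 1) with hM₂def
  have hM₂1 : 1 ≤ M₂ := le_trans (le_max_left 1 c₀) (le_max_left _ _)
  have hM₂c₀ : c₀ ≤ M₂ := le_trans (le_max_right 1 c₀) (le_max_left _ _)
  have hM₂C : (C / (β/2)).toReal + 1 ≤ M₂ := le_max_right _ _
  have hM₂0 : (0:ℝ) ≤ M₂ := by linarith
  have hterm : ∀ k : ℕ, ENNReal.ofReal c₀ * (β/2) ≤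
      ENNReal.ofReal (M₂ * 2^k) * volume {x | ENNReal.ofReal (M₂ * 2^k) < g x} := by
    intro k
    have h2k : (1:ℝ) ≤ 2^k := one_le_pow₀ (by norm_num)
    have hMk1 : 1 ≤ M₂ * 2^k := by nlinarith
    have hMkc₀ : c₀ ≤ M₂ * 2^k := by nlinarith
    have hMkM₂ : M₂ ≤ M₂ * 2^k := by nlinarith
    have hMkne0 : ENNReal.ofReal (M₂ * 2^k) ≠ 0 := (ENNReal.ofReal_pos.2 (by linarith)).ne'
    have hMbig : C ≤ β/2 * ENNReal.ofReal (M₂ * 2^k) := by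
      have h1 : C / (β/2) ≤ ENNReal.ofReal (M₂ * 2^k) := by
        rw [← ENNReal.ofReal_toReal hCdivt]
        apply ENNReal.ofReal_le_ofReal
        linarith
      have h2 := (ENNReal.div_le_iff_le_mul (Or.inl hβ20) (Or.inl hβ2t)).1 h1
      rwa [mul_comm] at h2
    have hst := stage (M₂ * 2^k) hMk1 hMkc₀ hMbig
    calc ENNReal.ofReal c₀ * (β/2)
        = ENNReal.ofReal (M₂ * 2^k) * (ENNReal.ofReal c₀ * (ENNReal.ofReal (M₂ * 2^k))⁻¹ * (β/2)) := by
          rw [show ENNReal.ofReal (M₂ * 2^k) * (ENNReal.ofReal c₀ * (ENNReal.ofReal (M₂ * 2^k))⁻¹ * (β/2))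
            = (ENNReal.ofReal (M₂ * 2^k) * (ENNReal.ofReal (M₂ * 2^k))⁻¹) * (ENNReal.ofReal c₀ * (β/2)) by ring]
          rw [ENNReal.mul_inv_cancel hMkne0 ofReal_ne_top, one_mul]
      _ ≤ ENNReal.ofReal (M₂ * 2^k) * volume {x | ENNReal.ofReal (M₂ * 2^k) < g x} :=
          mul_le_mul_right hst _
  have hsum := fun K : ℕ => Stmt9Aux.dyadic_sum hgmeas hM₂0 K hterm
  have hεne : ENNReal.ofReal c₀ * (β/2) ≠ 0 :=
    mul_ne_zero (ENNReal.ofReal_pos.2 hc₀pos).ne' hβ20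
  have h2It : 2 * I ≠ ⊤ := ENNReal.mul_ne_top ENNReal.ofNat_ne_top hIne
  have hdivt : (2 * I) / (ENNReal.ofReal c₀ * (β/2)) ≠ ⊤ :=
    ENNReal.mul_ne_top h2It (ENNReal.inv_ne_top.2 hεne)
  obtain ⟨K, hK⟩ := ENNReal.exists_nat_gt hdivt
  have hKle : (K : ℝ≥0∞) ≤ (2 * I) / (ENNReal.ofReal c₀ * (β/2)) := by
    rw [ENNReal.le_div_iff_mul_le (Or.inl hεne) (Or.inr h2It)]
    exact hsum K
  exact absurd hKle (not_le.2 hK)
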